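/- Let γ > 0 and φ̃ > 0. Then there exists exactly one P > 0 satisfying log(1+P·γ) = 1 + (φ̃·γ − 1)/(1+P·γ). (Logarithms are natural.) -/

import Mathlib

lemma hmono_aux : StrictMonoOn (fun x : ℝ => x * Real.log x - x) (Set.Ici 1) := by
  apply strictMonoOn_of_deriv_pos (convex_Ici 1)
  · apply ContinuousOn.sub _ continuousOn_id
    exact continuousOn_id.mul (Real.continuousOn_log.mono (by intro x hx; simp at hx ⊢; linarith))
  · intro x hx
    rw [interior_Ici] at hx
    have hx1 : (1 : ℝ) < x := hx
    have hd : HasDerivAt (fun x : ℝ => x * Real.log x - x) (Real.log x) x := by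
      have h1 := Real.hasDerivAt_mul_log (by linarith : x ≠ 0)
      have := h1.sub (hasDerivAt_id x)
      have e : Real.log x + 1 - 1 = Real.log x := by ring
      rw [e] at this; exact this
    rw [hd.deriv]
    exact Real.log_pos hx1

lemma eq_iff_aux (c x : ℝ) (hx : 1 < x) :
    (Real.log x = 1 + (c - 1) / x) ↔ x * Real.log x - x = c - 1 := by
  have hx0 : x ≠ 0 := by linarith
  constructor <;> intro h
  · field_simp at h; nlinarith
  · field_simp; nlinarith

theorem lambert_power_exists_unique
    (γ φ : ℝ) (hγ : 0 < γ) (hφ : 0 < φ) :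
    ∃! P : ℝ, 0 < P ∧
      Real.log (1 + P * γ) = 1 + (φ * γ - 1) / (1 + P * γ) := by
  set c := φ * γ with hc
  have hc0 : 0 < c := mul_pos hφ hγ
  set h : ℝ → ℝ := fun x => x * Real.log x - x with hh
  -- find root x in (1, M]
  set M : ℝ := max (Real.exp 2) c with hM
  have hM2 : Real.exp 2 ≤ M := le_max_left _ _
  have hM1 : (1 : ℝ) ≤ M := le_trans (by nlinarith [Real.add_one_le_exp (2:ℝ)]) hM2
  have hlogM : 2 ≤ Real.log M := by
    rw [show (2:ℝ) = Real.log (Real.exp 2) by simp]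
    exact Real.log_le_log (Real.exp_pos 2) hM2
  have hhM : c - 1 ≤ h M := by
    have : c ≤ M := le_max_right _ _
    have : M * 1 ≤ M * (Real.log M - 1) := by nlinarith
    simp only [hh]
    nlinarith
  have hh1 : h 1 ≤ c - 1 := by simp [hh]; linarith
  have hcont : ContinuousOn h (Set.Icc 1 M) := by
    apply ContinuousOn.sub _ continuousOn_id
    exact continuousOn_id.mul (Real.continuousOn_log.mono (by intro x hx; simp at hx ⊢; linarith [hx.1]))
  obtain ⟨x, hxmem, hxeq⟩ := intermediate_value_Icc hM1 hcont ⟨hh1, hhM⟩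
  have hx1 : 1 < x := by
    rcases lt_or_eq_of_le hxmem.1 with h1 | h1
    · exact h1
    · exfalso; rw [← h1] at hxeq; simp [hh] at hxeq; linarith
  refine ⟨(x - 1) / γ, ⟨div_pos (by linarith) hγ, ?_⟩, ?_⟩
  · have hxg : 1 + (x - 1) / γ * γ = x := by field_simp; ring
    rw [hxg, eq_iff_aux c x hx1]
    exact hxeq
  · rintro P ⟨hP, hPeq⟩
    have hy1 : 1 < 1 + P * γ := by nlinarith
    rw [eq_iff_aux c _ hy1] at hPeq
    have : (1 + P * γ) = x := by
      apply hmono_aux.injOn (Set.mem_Ici.2 hy1.le) (Set.mem_Ici.2 hx1.le)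
      show (1 + P * γ) * Real.log (1 + P * γ) - (1 + P * γ) = x * Real.log x - x
      rw [hPeq]; exact hxeq.symm
    field_simp
    linarith
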